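/- Let A be an n×n real matrix. There exists a row vector C ∈ ℝ^{1×n} such that the pair (C, A) is observable (i.e., the matrix with rows C A^i, i = 0,...,n-1, is invertible) if and only if A is non-derogatory, i.e., the minimal polynomial of A equals its characteristic polynomial. -/

import Mathlib

open Matrix Polynomial UniqueFactorizationMonoid

private lemma key_kill {n : ℕ} (A : Matrix (Fin n) (Fin n) ℝ) (c : Fin n → ℝ)
    (r : Polynomial ℝ) (hr0 : r ≠ 0) (hrdeg : r.natDegree < (minpoly ℝ A).natDegree)
    (hkill : c ᵥ* (Polynomial.aeval A r) = 0) :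
    ∃ p ∈ (normalizedFactors (minpoly ℝ A)).toFinset,
      c ᵥ* (Polynomial.aeval A ((minpoly ℝ A) / p)) = 0 := by
  have hInt : IsIntegral ℝ A := ⟨A.charpoly, A.charpoly_monic, A.aeval_self_charpoly⟩
  set m := minpoly ℝ A with hm
  have hm0 : m ≠ 0 := minpoly.ne_zero hInt
  set g := EuclideanDomain.gcd r m with hgdef
  have hg_dvd_r : g ∣ r := EuclideanDomain.gcd_dvd_left r m
  have hg_dvd_m : g ∣ m := EuclideanDomain.gcd_dvd_right r m
  have hg0 : g ≠ 0 := by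
    intro h
    exact hr0 (EuclideanDomain.gcd_eq_zero_iff.mp h).1
  have hkillg : c ᵥ* (Polynomial.aeval A g) = 0 := by
    have : g = r * EuclideanDomain.gcdA r m + m * EuclideanDomain.gcdB r m :=
      EuclideanDomain.gcd_eq_gcd_ab r m
    rw [this, map_add, _root_.map_mul, _root_.map_mul, minpoly.aeval, zero_mul, add_zero,
      ← Matrix.vecMul_vecMul, hkill, Matrix.zero_vecMul]
  set h := m / g with hhdef
  have hm_eq : g * h = m := EuclideanDomain.mul_div_cancel' hg0 hg_dvd_m
  have hh0 : h ≠ 0 := by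
    intro h0; rw [h0, mul_zero] at hm_eq; exact hm0 hm_eq.symm
  have hgd : g.natDegree < m.natDegree :=
    lt_of_le_of_lt (Polynomial.natDegree_le_of_dvd hg_dvd_r hr0) hrdeg
  have hdeg_sum : m.natDegree = g.natDegree + h.natDegree := by
    rw [← hm_eq, Polynomial.natDegree_mul hg0 hh0]
  have hh_not_unit : ¬ IsUnit h := by
    intro hu
    have := Polynomial.natDegree_eq_zero_of_isUnit hu
    omega
  obtain ⟨q, hq_irr, hq_dvd⟩ := WfDvdMonoid.exists_irreducible_factor hh_not_unit hh0
  have hq_dvd_m : q ∣ m := hq_dvd.trans ⟨g, by rw [mul_comm]; exact hm_eq.symm⟩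
  obtain ⟨p, hp_mem, hassoc⟩ := exists_mem_normalizedFactors_of_dvd hm0 hq_irr hq_dvd_m
  have hp_dvd_h : p ∣ h := (hassoc.symm.dvd).trans hq_dvd
  obtain ⟨h', hh'⟩ := id hp_dvd_h
  have hp0 : p ≠ 0 := (irreducible_of_normalized_factor p hp_mem).ne_zero
  have hp_dvd_m : p ∣ m := hp_dvd_h.trans ⟨g, by rw [mul_comm]; exact hm_eq.symm⟩
  have hdiv : m / p = g * h' := by
    have h1 : p * (m / p) = m := EuclideanDomain.mul_div_cancel' hp0 hp_dvd_m
    have h2 : p * (g * h') = m := by rw [← hm_eq, hh']; ring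
    exact mul_left_cancel₀ hp0 (h1.trans h2.symm)
  refine ⟨p, Multiset.mem_toFinset.mpr hp_mem, ?_⟩
  rw [hdiv, _root_.map_mul, ← vecMul_vecMul, hkillg, zero_vecMul]

/-- there exists a row vector C making (C,A) observable iff A is
non-derogatory, i.e. its minimal polynomial equals its characteristic polynomial. -/
theorem stmt_18 (n : ℕ) (A : Matrix (Fin n) (Fin n) ℝ) :
    (∃ C : Matrix (Fin 1) (Fin n) ℝ,
      IsUnit (Matrix.of fun (i : Fin n) (j : Fin n) => (C * A ^ (i : ℕ)) 0 j)) ↔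
    minpoly ℝ A = A.charpoly := by
  have hInt : IsIntegral ℝ A := ⟨A.charpoly, A.charpoly_monic, A.aeval_self_charpoly⟩
  have hmon : (minpoly ℝ A).Monic := minpoly.monic hInt
  have hchn : A.charpoly.natDegree = n := by
    rw [Matrix.charpoly_natDegree_eq_dim, Fintype.card_fin]
  constructor
  · rintro ⟨C, hC⟩
    have hli : LinearIndependent ℝ
        (fun i => (Matrix.of fun (i : Fin n) (j : Fin n) => (C * A ^ (i : ℕ)) 0 j) i) :=
      Matrix.linearIndependent_rows_iff_isUnit.mpr hC
    have hdlt : ¬ (minpoly ℝ A).natDegree < n := by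
      intro hd
      have hsum : ∑ i : Fin n, (minpoly ℝ A).coeff i •
          (Matrix.of fun (i : Fin n) (j : Fin n) => (C * A ^ (i : ℕ)) 0 j) i = 0 := by
        funext j
        have haev : Polynomial.aeval A (minpoly ℝ A) =
            ∑ i ∈ Finset.range n, (minpoly ℝ A).coeff i • A ^ i :=
          Polynomial.aeval_eq_sum_range' hd A
        have h2 : ∑ i ∈ Finset.range n, (minpoly ℝ A).coeff i * (C * A ^ i) 0 j = 0 := by
          have h0 : (C * Polynomial.aeval A (minpoly ℝ A)) 0 j = 0 := by
            rw [minpoly.aeval, Matrix.mul_zero]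
            simp
          rw [haev, Matrix.mul_sum] at h0
          simpa [Matrix.mul_smul, Matrix.sum_apply, Matrix.smul_apply, smul_eq_mul] using h0
        simp only [Finset.sum_apply, Pi.smul_apply, Matrix.of_apply, smul_eq_mul,
          Pi.zero_apply]
        rw [Fin.sum_univ_eq_sum_range (fun i => (minpoly ℝ A).coeff i * (C * A ^ i) 0 j) n]
        exact h2
      have := Fintype.linearIndependent_iff.mp hli _ hsum ⟨(minpoly ℝ A).natDegree, hd⟩
      simp only at this
      rw [Polynomial.Monic.coeff_natDegree hmon] at this
      exact one_ne_zero this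
    have hdvd := A.minpoly_dvd_charpoly
    have hdle : (minpoly ℝ A).natDegree ≤ n := by
      have := Polynomial.natDegree_le_of_dvd hdvd (A.charpoly_monic.ne_zero)
      omega
    have hdeq : (minpoly ℝ A).natDegree = n := by omega
    obtain ⟨qq, hqq⟩ := hdvd
    have hqq0 : qq ≠ 0 := by
      intro h0; rw [h0, mul_zero] at hqq; exact A.charpoly_monic.ne_zero hqq
    have hqqdeg : qq.natDegree = 0 := by
      have := Polynomial.natDegree_mul (hmon.ne_zero) hqq0
      rw [← hqq, hchn, hdeq] at this
      omega
    have hqq1 : qq = 1 := by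
      have hlc : qq.Monic := by
        have := congrArg Polynomial.leadingCoeff hqq
        rw [Polynomial.leadingCoeff_mul, A.charpoly_monic.leadingCoeff,
          hmon.leadingCoeff, one_mul] at this
        exact this.symm
      exact hlc.natDegree_eq_zero.mp hqqdeg
    rw [hqq, hqq1, mul_one]
  · intro hmc
    classical
    have hdeq : (minpoly ℝ A).natDegree = n := by rw [hmc, hchn]
    -- covering argument
    set m := minpoly ℝ A with hm
    set S : Finset (Subspace ℝ (Fin n → ℝ)) :=
      (normalizedFactors m).toFinset.image
        (fun p => LinearMap.ker ((Polynomial.aeval A (m / p)).vecMulLinear)) with hS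
    have htop : ⊤ ∉ S := by
      intro htop
      rw [hS, Finset.mem_image] at htop
      obtain ⟨p, hp_mem, hker⟩ := htop
      rw [Multiset.mem_toFinset] at hp_mem
      have hzero : Polynomial.aeval A (m / p) = 0 := by
        have hk := LinearMap.ker_eq_top.mp hker
        ext i j
        have : (Pi.single i 1 : Fin n → ℝ) ᵥ* (Polynomial.aeval A (m / p)) = 0 := by
          have := congrFun (congrArg (fun f => f.toFun) hk) (Pi.single i 1)
          simpa [Matrix.vecMulLinear] using this
        have := congrFun this j
        simpa [Matrix.single_vecMul, Matrix.vecMul, dotProduct,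
          Pi.single_apply, Finset.sum_ite_eq'] using this
      have hm0 : m ≠ 0 := hmon.ne_zero
      have hp0 : p ≠ 0 := (irreducible_of_normalized_factor p hp_mem).ne_zero
      have hp_dvd : p ∣ m := dvd_of_mem_normalizedFactors hp_mem
      have hmeq : p * (m / p) = m := EuclideanDomain.mul_div_cancel' hp0 hp_dvd
      have hmp0 : m / p ≠ 0 := by
        intro h0; rw [h0, mul_zero] at hmeq; exact hm0 hmeq.symm
      have hmdvd : m ∣ m / p := minpoly.dvd ℝ A hzero
      have h1 : m.natDegree ≤ (m / p).natDegree :=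
        Polynomial.natDegree_le_of_dvd hmdvd hmp0
      have h2 : m.natDegree = p.natDegree + (m / p).natDegree := by
        conv_lhs => rw [← hmeq]
        exact Polynomial.natDegree_mul hp0 hmp0
      have h3 : 0 < p.natDegree :=
        (irreducible_of_normalized_factor p hp_mem).natDegree_pos
      omega
    have hne := Subspace.biUnion_ne_univ_of_top_notMem htop
    obtain ⟨c, hc⟩ := Set.ne_univ_iff_exists_notMem _ |>.mp hne
    simp only [Set.mem_iUnion, not_exists, SetLike.mem_coe] at hc
    -- c avoids all the kernels
    have hgood : ∀ p ∈ (normalizedFactors m).toFinset,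
        c ᵥ* (Polynomial.aeval A (m / p)) ≠ 0 := by
      intro p hp hcon
      exact hc _ (Finset.mem_image_of_mem _ hp) (LinearMap.mem_ker.mpr hcon)
    refine ⟨Matrix.of (fun _ j => c j), ?_⟩
    rw [← Matrix.linearIndependent_rows_iff_isUnit]
    rw [Fintype.linearIndependent_iff]
    intro g hg
    by_contra hgne
    push_neg at hgne
    obtain ⟨i0, hi0⟩ := hgne
    set r : Polynomial ℝ := ∑ i : Fin n, Polynomial.C (g i) * Polynomial.X ^ (i : ℕ) with hr
    have hrcoeff : ∀ i : Fin n, r.coeff i = g i := by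
      intro i
      rw [hr, Polynomial.finset_sum_coeff]
      rw [Finset.sum_eq_single i]
      · simp
      · intro b _ hbne
        rw [Polynomial.coeff_C_mul, Polynomial.coeff_X_pow, if_neg (by
          intro h; exact hbne (Fin.ext (by exact_mod_cast h.symm))), mul_zero]
      · intro h; exact absurd (Finset.mem_univ i) h
    have hr0 : r ≠ 0 := by
      intro h0
      apply hi0
      rw [← hrcoeff i0, h0, Polynomial.coeff_zero]
    have hrdeg : r.degree < n := by
      rw [hr]
      apply lt_of_le_of_lt (Polynomial.degree_sum_le _ _)
      rw [Finset.sup_lt_iff (by exact_mod_cast WithBot.bot_lt_coe n)]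
      intro i _
      apply lt_of_le_of_lt (Polynomial.degree_C_mul_X_pow_le _ _)
      exact_mod_cast i.isLt
    have hrnat : r.natDegree < n := by
      rwa [← Polynomial.natDegree_lt_iff_degree_lt hr0] at hrdeg
    have haev : Polynomial.aeval A r = ∑ i : Fin n, g i • A ^ (i : ℕ) := by
      rw [hr, map_sum]
      refine Finset.sum_congr rfl fun i _ => ?_
      rw [_root_.map_mul, Polynomial.aeval_C, map_pow, Polynomial.aeval_X, ← Algebra.smul_def]
    have hkill : c ᵥ* (Polynomial.aeval A r) = 0 := by
      have hgj : ∀ j, ∑ i : Fin n,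
          g i * ((Matrix.of (fun _ j => c j) : Matrix (Fin 1) (Fin n) ℝ) * A ^ (i : ℕ)) 0 j
          = 0 := by
        intro j
        have := congrFun hg j
        simpa using this
      funext j
      rw [haev]
      show ∑ k, c k * (∑ i : Fin n, g i • A ^ (i : ℕ)) k j = (0 : Fin n → ℝ) j
      have e1 : ∀ k, (∑ i : Fin n, g i • A ^ (i : ℕ)) k j
          = ∑ i : Fin n, g i * (A ^ (i : ℕ)) k j := by
        intro k
        rw [Matrix.sum_apply]
        exact Finset.sum_congr rfl fun i _ => rfl
      calc ∑ k, c k * (∑ i : Fin n, g i • A ^ (i : ℕ)) k j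
          = ∑ k, ∑ i : Fin n, c k * (g i * (A ^ (i : ℕ)) k j) := by
            refine Finset.sum_congr rfl fun k _ => ?_
            rw [e1, Finset.mul_sum]
        _ = ∑ i : Fin n, ∑ k, c k * (g i * (A ^ (i : ℕ)) k j) := Finset.sum_comm
        _ = ∑ i : Fin n,
              g i * ((Matrix.of (fun _ j => c j) : Matrix (Fin 1) (Fin n) ℝ) * A ^ (i : ℕ)) 0 j := by
            refine Finset.sum_congr rfl fun i _ => ?_
            rw [Matrix.mul_apply, Finset.mul_sum]
            exact Finset.sum_congr rfl fun k _ => by simp only [Matrix.of_apply]; ring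
        _ = 0 := hgj j
    obtain ⟨p, hp, hpk⟩ := key_kill A c r hr0 (by rwa [hdeq]) hkill
    exact hgood p hp hpk
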